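/- (Gangl–Kaneko–Zagier sum formula for even arguments) For every even integer k ≥ 4 one has Σ ζ(r, s) = (3/4) · ζ(k), where the sum runs over all pairs of even integers r, s ≥ 2 with r + s = k, ζ(r,s) = Σ_{m > n > 0} 1/(m^r n^s), and ζ(k) = Σ_{n≥1} n^{−k}. -/
import Mathlib

open Finset Filter Topology

noncomputable def gkzH (n : ℕ) : ℝ := ∑ i ∈ Finset.range n, 1 / ((i : ℝ) + 1)

lemma gkz_hasSum_H (k : ℕ) :
    HasSum (fun d : ℕ => 1 / ((d : ℝ) + 1) - 1 / ((d : ℝ) + 1 + (k : ℝ))) (gkzH k) := by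
  set f : ℕ → ℝ := fun d => 1 / ((d : ℝ) + 1) with hf
  have hnn : ∀ d : ℕ, 0 ≤ f d - f (d + k) := by
    intro d
    have : f (d + k) ≤ f d := by
      apply one_div_le_one_div_of_le
      · positivity
      · push_cast; linarith [Nat.cast_nonneg (α := ℝ) k]
    linarith
  have hfk : ∀ d : ℕ, 1 / ((d : ℝ) + 1 + (k : ℝ)) = f (d + k) := by
    intro d; simp only [hf]; push_cast; ring_nf
  have key : ∀ N : ℕ, ∑ d ∈ range N, (f d - f (d + k)) =
      gkzH k - ∑ i ∈ range k, f (N + i) := by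
    intro N
    rw [Finset.sum_sub_distrib]
    have h1 : ∑ d ∈ range N, f (d + k) = ∑ d ∈ range N, f (k + d) := by
      congr 1; ext d; rw [Nat.add_comm]
    have h2 : ∑ x ∈ range (k + N), f x = ∑ x ∈ range k, f x + ∑ x ∈ range N, f (k + x) :=
      Finset.sum_range_add f k N
    have h3 : ∑ x ∈ range (N + k), f x = ∑ x ∈ range N, f x + ∑ x ∈ range k, f (N + x) :=
      Finset.sum_range_add f N k
    have h4 : k + N = N + k := Nat.add_comm k N
    rw [h1]
    have : ∑ d ∈ range N, f (k + d) = ∑ x ∈ range (N + k), f x - ∑ x ∈ range k, f x := by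
      rw [← h4, h2]; ring
    rw [this, h3, gkzH]
    simp only [f]
    ring
  have hlim : Tendsto (fun N : ℕ => ∑ d ∈ range N, (f d - f (d + k))) atTop (𝓝 (gkzH k)) := by
    simp only [key]
    have : Tendsto (fun N : ℕ => ∑ i ∈ range k, f (N + i)) atTop (𝓝 0) := by
      have : Tendsto (fun N : ℕ => ∑ i ∈ range k, f (N + i)) atTop (𝓝 (∑ i ∈ range k, (0:ℝ))) := by
        apply tendsto_finset_sum
        intro i _
        have : Tendsto (fun N : ℕ => N + i) atTop atTop := tendsto_atTop_atTop_of_monotone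
          (fun a b hab => Nat.add_le_add_right hab i) (fun b => ⟨b, Nat.le_add_right b i⟩)
        exact (tendsto_one_div_add_atTop_nhds_zero_nat.comp this).congr (by intro N; simp [f])
      simpa using this
    simpa using tendsto_const_nhds.sub this
  have heq : (fun d : ℕ => 1 / ((d : ℝ) + 1) - 1 / ((d : ℝ) + 1 + (k : ℝ)))
      = fun d => f d - f (d + k) := by
    funext d; rw [hfk]
  rw [heq, hasSum_iff_tendsto_nat_of_nonneg hnn]
  exact hlim

lemma gkz_hasSum_B (n : ℕ) (hn : 0 < n) :
    HasSum (fun d : ℕ => 1 / (((n + d + 1 : ℕ) : ℝ) ^ 2 - (n : ℝ) ^ 2))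
      (gkzH (2 * n) / (2 * n)) := by
  have h := (gkz_hasSum_H (2 * n)).div_const (2 * (n : ℝ))
  have hfun : (fun d : ℕ => 1 / (((n + d + 1 : ℕ) : ℝ) ^ 2 - (n : ℝ) ^ 2))
      = fun d : ℕ => (1 / ((d : ℝ) + 1) - 1 / ((d : ℝ) + 1 + ((2 * n : ℕ) : ℝ))) / (2 * (n : ℝ)) := by
    funext d
    have hn' : (0:ℝ) < n := by exact_mod_cast hn
    have h1 : (0:ℝ) < (d : ℝ) + 1 := by positivity
    have h2 : (0:ℝ) < (d : ℝ) + 1 + 2 * (n : ℝ) := by positivity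
    push_cast
    rw [div_sub_div _ _ (ne_of_gt h1) (ne_of_gt h2), div_div]
    rw [div_eq_div_iff (by nlinarith) (by positivity)]
    ring
  rw [hfun]
  exact h

lemma gkz_A_closed (M : ℕ) :
    ∑ t ∈ Finset.range M, 1 / (((M + 1 : ℕ) : ℝ) ^ 2 - ((t + 1 : ℕ) : ℝ) ^ 2)
      = (gkzH M + gkzH (2 * M + 1) - gkzH (M + 1)) / (2 * ((M : ℝ) + 1)) := by
  have key : ∀ t ∈ Finset.range M,
      1 / (((M + 1 : ℕ) : ℝ) ^ 2 - ((t + 1 : ℕ) : ℝ) ^ 2)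
      = (1 / ((M : ℝ) - t) + 1 / ((M : ℝ) + t + 2)) / (2 * ((M : ℝ) + 1)) := by
    intro t ht
    rw [Finset.mem_range] at ht
    have h1 : (t : ℝ) < M := by exact_mod_cast ht
    have h2 : (0:ℝ) < (M : ℝ) - t := by linarith
    have h3 : (0:ℝ) < (M : ℝ) + t + 2 := by positivity
    have h4 : (0:ℝ) < (M : ℝ) + 1 := by positivity
    push_cast
    rw [div_add_div _ _ (ne_of_gt h2) (ne_of_gt h3), div_div]
    rw [div_eq_div_iff (by nlinarith) (by positivity)]
    ring
  have e1 : ∑ t ∈ Finset.range M, 1 / ((M : ℝ) - t) = gkzH M := by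
    have hrefl := Finset.sum_range_reflect (fun j => 1 / ((j : ℝ) + 1)) M
    rw [gkzH, ← hrefl]
    apply Finset.sum_congr rfl
    intro t ht
    rw [Finset.mem_range] at ht
    congr 1
    have he : (M - 1 - t : ℕ) = M - (t+1) := by omega
    rw [he, Nat.cast_sub (by omega)]
    push_cast
    ring
  have e2 : ∑ t ∈ Finset.range M, 1 / ((M : ℝ) + t + 2) = gkzH (2 * M + 1) - gkzH (M + 1) := by
    have h := Finset.sum_range_add (fun j => 1 / ((j : ℝ) + 1)) (M + 1) M
    have h2 : 2 * M + 1 = M + 1 + M := by omega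
    rw [h2, gkzH, gkzH, h]
    have hc : ∀ t ∈ Finset.range M, 1 / ((M + 1 + t : ℕ) + 1 : ℝ) = 1 / ((M : ℝ) + t + 2) := by
      intro t _; push_cast; ring_nf
    rw [Finset.sum_congr rfl hc]
    ring
  rw [Finset.sum_congr rfl key, ← Finset.sum_div, Finset.sum_add_distrib, e1, e2]
  ring

abbrev gkzS := {q : ℕ × ℕ // q.2 < q.1 ∧ 0 < q.2}

/-- `(t, i) ↦ (m, n) = (t + i + 2, t + 1)`, i.e. `n = t+1`, `m = n + i + 1`. -/
def gkzE : ℕ × ℕ ≃ gkzS where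
  toFun p := ⟨(p.1 + p.2 + 2, p.1 + 1), by omega⟩
  invFun s := (s.1.2 - 1, s.1.1 - s.1.2 - 1)
  left_inv p := by obtain ⟨t, i⟩ := p; simp only; ext <;> simp <;> omega
  right_inv s := by
    obtain ⟨⟨m, n⟩, h1, h2⟩ := s
    ext <;> simp <;> omega

lemma gkz_summable_aux : Summable (fun i : ℕ => 1 / ((i : ℝ) + 1) ^ 2) := by
  have h0 : Summable (fun n : ℕ => 1 / (n : ℝ) ^ 2) :=
    Real.summable_one_div_nat_pow.mpr one_lt_two
  have := (summable_nat_add_iff (f := fun n : ℕ => 1 / (n : ℝ) ^ 2) 1).mpr h0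
  apply this.congr
  intro i
  push_cast
  ring

lemma gkz_summable_sq :
    Summable (fun p : ℕ × ℕ => (1 / ((p.1 : ℝ) + 1) ^ 2) * (1 / ((p.2 : ℝ) + 1) ^ 2)) := by
  apply Summable.mul_of_nonneg gkz_summable_aux gkz_summable_aux <;> intro i <;> positivity

lemma gkz_summable_master {f : gkzS → ℝ} (hnn : ∀ p, 0 ≤ f p)
    (hb : ∀ p : ℕ × ℕ, f (gkzE p) ≤ (1 / ((p.1 : ℝ) + 1) ^ 2) * (1 / ((p.2 : ℝ) + 1) ^ 2)) :
    Summable f := by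
  rw [← gkzE.summable_iff]
  exact Summable.of_nonneg_of_le (fun p => hnn _) hb gkz_summable_sq

lemma gkz_bound_key {t i : ℕ} {r s : ℕ} (hr : 2 ≤ r) (hs : 2 ≤ s) :
    ((t : ℝ) + 1) ^ 2 * ((i : ℝ) + 1) ^ 2 ≤ ((t + i + 2 : ℕ) : ℝ) ^ r * ((t + 1 : ℕ) : ℝ) ^ s := by
  have ht : (0:ℝ) ≤ (t : ℝ) := Nat.cast_nonneg t
  have hi : (0:ℝ) ≤ (i : ℝ) := Nat.cast_nonneg i
  have b1 : (1:ℝ) ≤ (t : ℝ) + (i : ℝ) + 2 := by linarith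
  have b2 : (1:ℝ) ≤ (t : ℝ) + 1 := by linarith
  push_cast
  calc ((t : ℝ) + 1) ^ 2 * ((i : ℝ) + 1) ^ 2
      ≤ ((t : ℝ) + 1) ^ 2 * ((t : ℝ) + (i : ℝ) + 2) ^ 2 := by
        apply mul_le_mul_of_nonneg_left _ (by positivity)
        apply pow_le_pow_left₀ (by positivity) (by linarith)
    _ ≤ ((t : ℝ) + 1) ^ s * ((t : ℝ) + (i : ℝ) + 2) ^ r :=
        mul_le_mul (pow_le_pow_right₀ b2 hs) (pow_le_pow_right₀ b1 hr) (by positivity) (by positivity)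
    _ = ((t : ℝ) + (i : ℝ) + 2) ^ r * ((t : ℝ) + 1) ^ s := by ring

lemma gkz_summable_dzeta {r s : ℕ} (hr : 2 ≤ r) (hs : 2 ≤ s) :
    Summable (fun p : gkzS => (1 : ℝ) / ((p.1.1 : ℝ) ^ r * (p.1.2 : ℝ) ^ s)) := by
  apply gkz_summable_master (fun p => by positivity)
  rintro ⟨t, i⟩
  simp only [gkzE, Equiv.coe_fn_mk]
  rw [one_div, div_mul_div_comm, one_mul, one_div]
  apply inv_anti₀ (by positivity)
  exact gkz_bound_key hr hs

noncomputable def gkzFa (c : ℕ) : gkzS → ℝ :=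
  fun p => 1 / ((p.1.2 : ℝ) ^ c * ((p.1.1 : ℝ) ^ 2 - (p.1.2 : ℝ) ^ 2))
noncomputable def gkzFb (c : ℕ) : gkzS → ℝ :=
  fun p => 1 / ((p.1.1 : ℝ) ^ c * ((p.1.1 : ℝ) ^ 2 - (p.1.2 : ℝ) ^ 2))
noncomputable def gkzGa (c : ℕ) : ℕ → ℝ :=
  fun n => (1 / (n : ℝ) ^ c) * (gkzH (2 * n) / (2 * n))
noncomputable def gkzGb (c : ℕ) : ℕ → ℝ :=
  fun n => (1 / (n : ℝ) ^ c) * ((gkzH (n - 1) + gkzH (2 * n - 1) - gkzH n) / (2 * n))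

lemma gkz_pos (p : gkzS) : (0:ℝ) < (p.1.1 : ℝ) ^ 2 - (p.1.2 : ℝ) ^ 2 := by
  obtain ⟨⟨m, n⟩, h1, h2⟩ := p
  have : (n:ℝ) < m := by exact_mod_cast h1
  have : (0:ℝ) ≤ n := Nat.cast_nonneg n
  simp only
  nlinarith

lemma gkz_Fa_nonneg (c : ℕ) (p : gkzS) : 0 ≤ gkzFa c p := by
  have := gkz_pos p
  have h2 : (0:ℝ) < (p.1.2 : ℝ) := by exact_mod_cast p.2.2
  unfold gkzFa; positivity

lemma gkz_Fb_le_Fa (c : ℕ) (p : gkzS) : gkzFb c p ≤ gkzFa c p := by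
  have h1 := gkz_pos p
  have h2 : (0:ℝ) < (p.1.2 : ℝ) := by exact_mod_cast p.2.2
  have h3 : (p.1.2:ℝ) ≤ (p.1.1:ℝ) := by exact_mod_cast le_of_lt p.2.1
  unfold gkzFa gkzFb
  apply one_div_le_one_div_of_le (by positivity)
  have hpc : (p.1.2:ℝ)^c ≤ (p.1.1:ℝ)^c := pow_le_pow_left₀ (le_of_lt h2) h3 c
  exact mul_le_mul_of_nonneg_right hpc (le_of_lt h1)

lemma gkz_Fb_nonneg (c : ℕ) (p : gkzS) : 0 ≤ gkzFb c p := by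
  have := gkz_pos p
  have h2 : (0:ℝ) < (p.1.1 : ℝ) := by
    have : (0:ℝ) ≤ (p.1.2:ℝ) := Nat.cast_nonneg _
    have h3 : (p.1.2:ℝ) < (p.1.1:ℝ) := by exact_mod_cast p.2.1
    linarith
  unfold gkzFb; positivity

lemma gkz_summable_Fa {c : ℕ} (hc : 2 ≤ c) : Summable (gkzFa c) := by
  apply gkz_summable_master (gkz_Fa_nonneg c)
  rintro ⟨t, i⟩
  simp only [gkzFa, gkzE, Equiv.coe_fn_mk]
  rw [one_div, div_mul_div_comm, one_mul, one_div]
  apply inv_anti₀ (by positivity)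
  have key : ((i:ℝ) + 1) ^ 2 ≤ ((t + i + 2 : ℕ) : ℝ) ^ 2 - ((t + 1 : ℕ) : ℝ) ^ 2 := by
    push_cast; nlinarith [Nat.cast_nonneg (α := ℝ) t, Nat.cast_nonneg (α := ℝ) i]
  have key2 : ((t:ℝ) + 1) ^ 2 ≤ ((t + 1 : ℕ) : ℝ) ^ c := by
    push_cast
    calc ((t:ℝ) + 1) ^ 2 ≤ ((t:ℝ) + 1) ^ c := pow_le_pow_right₀ (by linarith [Nat.cast_nonneg (α := ℝ) t]) hc
      _ = _ := rfl
  calc ((t:ℝ)+1)^2 * ((i:ℝ)+1)^2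
      ≤ ((t + 1 : ℕ) : ℝ) ^ c * (((t + i + 2 : ℕ) : ℝ) ^ 2 - ((t + 1 : ℕ) : ℝ) ^ 2) := by
        apply mul_le_mul key2 key (by positivity) (by positivity)
    _ = _ := rfl

lemma gkz_summable_Fb {c : ℕ} (hc : 2 ≤ c) : Summable (gkzFb c) :=
  Summable.of_nonneg_of_le (gkz_Fb_nonneg c) (gkz_Fb_le_Fa c) (gkz_summable_Fa hc)

lemma gkzH_nonneg (n : ℕ) : 0 ≤ gkzH n := by
  unfold gkzH; positivity

lemma gkzH_le (n : ℕ) : gkzH n ≤ n := by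
  unfold gkzH
  calc ∑ i ∈ Finset.range n, 1 / ((i:ℝ) + 1) ≤ ∑ i ∈ Finset.range n, 1 := by
        apply Finset.sum_le_sum
        intro i _
        rw [div_le_one (by positivity)]
        linarith [Nat.cast_nonneg (α := ℝ) i]
    _ = n := by simp

lemma gkzH_mono : Monotone gkzH := by
  intro a b hab
  unfold gkzH
  apply Finset.sum_le_sum_of_subset_of_nonneg (Finset.range_subset_range.mpr hab)
  intro i _ _; positivity

lemma gkz_summable_Ga {c : ℕ} (hc : 2 ≤ c) : Summable (gkzGa c) := by
  apply Summable.of_nonneg_of_le (g := gkzGa c) (f := fun n : ℕ => 1 / (n:ℝ) ^ c)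
  · intro n; unfold gkzGa
    have := gkzH_nonneg (2 * n)
    positivity
  · intro n
    unfold gkzGa
    rcases Nat.eq_zero_or_pos n with h | h
    · simp [h]
    · have hn : (0:ℝ) < n := by exact_mod_cast h
      have h1 : gkzH (2 * n) / (2 * (n:ℝ)) ≤ 1 := by
        rw [div_le_one (by positivity)]
        calc gkzH (2 * n) ≤ ((2 * n : ℕ) : ℝ) := gkzH_le _
          _ = 2 * (n:ℝ) := by push_cast; ring
      calc (1 / (n:ℝ)^c) * (gkzH (2*n) / (2*n)) ≤ (1 / (n:ℝ)^c) * 1 :=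
            mul_le_mul_of_nonneg_left h1 (by positivity)
        _ = 1 / (n:ℝ)^c := mul_one _
  · exact Real.summable_one_div_nat_pow.mpr (by omega)

lemma gkz_summable_Gb {c : ℕ} (hc : 2 ≤ c) : Summable (gkzGb c) := by
  apply Summable.of_nonneg_of_le (g := gkzGb c) (f := fun n : ℕ => 2 * (1 / (n:ℝ) ^ c))
  · intro n; unfold gkzGb
    have h1 : gkzH n ≤ gkzH (n - 1) + gkzH (2 * n - 1) := by
      rcases Nat.eq_zero_or_pos n with h | h
      · simp [h, gkzH_nonneg]
      · calc gkzH n ≤ gkzH (2 * n - 1) := gkzH_mono (by omega)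
          _ ≤ gkzH (n - 1) + gkzH (2 * n - 1) := by linarith [gkzH_nonneg (n - 1)]
    have h2 : (0:ℝ) ≤ gkzH (n-1) + gkzH (2*n-1) - gkzH n := by linarith
    positivity
  · intro n
    unfold gkzGb
    rcases Nat.eq_zero_or_pos n with h | h
    · simp [h]
    · have hn : (0:ℝ) < n := by exact_mod_cast h
      have h1 : (gkzH (n-1) + gkzH (2*n-1) - gkzH n) / (2 * (n:ℝ)) ≤ 2 := by
        rw [div_le_iff₀ (by positivity)]
        have a1 : gkzH (n-1) ≤ ((n - 1 : ℕ) : ℝ) := gkzH_le _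
        have a2 : gkzH (2*n-1) ≤ ((2*n - 1 : ℕ) : ℝ) := gkzH_le _
        have a3 : 0 ≤ gkzH n := gkzH_nonneg n
        have b1 : ((n - 1 : ℕ) : ℝ) ≤ (n:ℝ) := by
          have : (n - 1 : ℕ) ≤ n := by omega
          exact_mod_cast this
        have b2 : ((2*n - 1 : ℕ) : ℝ) ≤ 2*(n:ℝ) := by
          have : ((2*n - 1 : ℕ) : ℝ) ≤ ((2*n : ℕ) : ℝ) := by exact_mod_cast (by omega : 2*n-1 ≤ 2*n)
          push_cast at this ⊢; linarith
        linarith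
      calc (1 / (n:ℝ)^c) * ((gkzH (n-1) + gkzH (2*n-1) - gkzH n) / (2*n)) ≤ (1 / (n:ℝ)^c) * 2 :=
            mul_le_mul_of_nonneg_left h1 (by positivity)
        _ = 2 * (1 / (n:ℝ)^c) := by ring
  · exact (Real.summable_one_div_nat_pow.mpr (by omega)).mul_left 2

lemma gkzGa_zero {c : ℕ} (hc : 2 ≤ c) : gkzGa c 0 = 0 := by
  unfold gkzGa
  rw [Nat.cast_zero, zero_pow (by omega : c ≠ 0)]
  simp

lemma gkz_tsum_Fa {c : ℕ} (hc : 2 ≤ c) : ∑' p, gkzFa c p = ∑' n, gkzGa c n := by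
  have hS := gkz_summable_Fa hc
  have hE : Summable (fun q : ℕ × ℕ => gkzFa c (gkzE q)) := gkzE.summable_iff.mpr hS
  have inner : ∀ t : ℕ, (∑' i : ℕ, gkzFa c (gkzE (t, i))) = gkzGa c (t + 1) := by
    intro t
    have h := (gkz_hasSum_B (t + 1) (Nat.succ_pos t)).mul_left (1 / ((t + 1 : ℕ) : ℝ) ^ c)
    unfold gkzGa
    rw [← h.tsum_eq]
    apply tsum_congr
    intro i
    simp only [gkzFa, gkzE, Equiv.coe_fn_mk]
    have harg : (t + 1 + i + 1 : ℕ) = (t + i + 2 : ℕ) := by omega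
    rw [harg]
    exact (one_div_mul_one_div _ _).symm
  rw [← Equiv.tsum_eq gkzE (gkzFa c), Summable.tsum_prod hE,
    Summable.tsum_eq_zero_add (gkz_summable_Ga hc), gkzGa_zero hc, zero_add]
  exact tsum_congr inner

lemma gkz_tsum_Fb {c : ℕ} (hc : 2 ≤ c) : ∑' p, gkzFb c p = ∑' n, gkzGb c n := by
  classical
  set Sset : Set (ℕ × ℕ) := {q | q.2 < q.1 ∧ 0 < q.2} with hSset
  set fb' : ℕ × ℕ → ℝ := fun q => 1 / ((q.1 : ℝ) ^ c * ((q.1 : ℝ) ^ 2 - (q.2 : ℝ) ^ 2)) with hfb'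
  have hsub : Summable (fun x : ↥Sset => fb' x) := gkz_summable_Fb hc
  have hind : Summable (Sset.indicator fb') := summable_subtype_iff_indicator.mp hsub
  have h0 : (∑' p : gkzS, gkzFb c p) = ∑' q : ℕ × ℕ, Sset.indicator fb' q := by
    rw [← tsum_subtype Sset fb']
    rfl
  have inner : ∀ m : ℕ, (∑' n : ℕ, Sset.indicator fb' (m, n)) = gkzGb c m := by
    intro m
    have hzero : ∀ n ∉ Finset.Ico 1 m, Sset.indicator fb' (m, n) = 0 := by
      intro n hn
      apply Set.indicator_of_notMem
      rw [Finset.mem_Ico] at hn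
      simp only [hSset, Set.mem_setOf_eq]
      omega
    rw [tsum_eq_sum hzero]
    have hmem : ∀ n ∈ Finset.Ico 1 m, Sset.indicator fb' (m, n) = fb' (m, n) := by
      intro n hn
      apply Set.indicator_of_mem
      rw [Finset.mem_Ico] at hn
      simp only [hSset, Set.mem_setOf_eq]
      omega
    rw [Finset.sum_congr rfl hmem]
    rcases Nat.eq_zero_or_pos m with h | h
    · subst h
      simp [gkzGb]
    · obtain ⟨M, rfl⟩ : ∃ M, m = M + 1 := ⟨m - 1, by omega⟩
      rw [Finset.sum_Ico_eq_sum_range]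
      simp only [Nat.add_sub_cancel]
      have hterm : ∀ t ∈ Finset.range M, fb' (M + 1, 1 + t)
          = (1 / ((M + 1 : ℕ) : ℝ) ^ c) * (1 / (((M + 1 : ℕ) : ℝ) ^ 2 - ((t + 1 : ℕ) : ℝ) ^ 2)) := by
        intro t _
        simp only [hfb']
        have : (1 + t : ℕ) = (t + 1 : ℕ) := by omega
        rw [this]
        exact (one_div_mul_one_div _ _).symm
      rw [Finset.sum_congr rfl hterm, ← Finset.mul_sum, gkz_A_closed M]
      unfold gkzGb
      have e1 : (M + 1 - 1 : ℕ) = M := by omega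
      have e2 : (2 * (M + 1) - 1 : ℕ) = 2 * M + 1 := by omega
      rw [e1, e2]
      push_cast
      ring
  rw [h0, Summable.tsum_prod hind]
  exact tsum_congr inner

lemma gkzH_succ (j : ℕ) : gkzH (j + 1) = gkzH j + 1 / ((j : ℝ) + 1) :=
  Finset.sum_range_succ _ j

lemma gkz_G_diff {c : ℕ} (hc : 2 ≤ c) (n : ℕ) :
    gkzGa c n - gkzGb c n = 3 / 4 * (1 / (n : ℝ) ^ (c + 2)) := by
  rcases Nat.eq_zero_or_pos n with h | h
  · subst h
    unfold gkzGa gkzGb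
    rw [Nat.cast_zero, zero_pow (by omega : c ≠ 0), zero_pow (by omega : c + 2 ≠ 0)]
    simp
  · have hn : (0:ℝ) < n := by exact_mod_cast h
    have h2n : (2 * n - 1 : ℕ) + 1 = 2 * n := by omega
    have hn1 : (n - 1 : ℕ) + 1 = n := by omega
    have g1 : gkzH (2 * n) = gkzH (2 * n - 1) + 1 / (((2 * n - 1 : ℕ) : ℝ) + 1) := by
      conv_lhs => rw [← h2n]
      exact gkzH_succ _
    have g2 : gkzH n = gkzH (n - 1) + 1 / (((n - 1 : ℕ) : ℝ) + 1) := by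
      conv_lhs => rw [← hn1]
      exact gkzH_succ _
    have c1 : ((2 * n - 1 : ℕ) : ℝ) + 1 = 2 * (n : ℝ) := by
      rw [Nat.cast_sub (by omega : 1 ≤ 2 * n)]
      push_cast
      ring
    have c2 : ((n - 1 : ℕ) : ℝ) + 1 = (n : ℝ) := by
      rw [Nat.cast_sub (by omega : 1 ≤ n)]
      push_cast
      ring
    unfold gkzGa gkzGb
    rw [g1, g2, c1, c2, pow_add]
    have hnc : (n : ℝ) ^ c ≠ 0 := by positivity
    field_simp
    ring

lemma gkz_telescope (m n : ℝ) (hm : m ≠ 0) (hn : n ≠ 0) (hmn : m ^ 2 - n ^ 2 ≠ 0) (J : ℕ) :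
    ∑ j ∈ Finset.range J, 1 / (m ^ (2 * j + 2) * n ^ (2 * J - 2 * j)) =
      1 / (n ^ (2 * J) * (m ^ 2 - n ^ 2)) - 1 / (m ^ (2 * J) * (m ^ 2 - n ^ 2)) := by
  induction J with
  | zero => simp
  | succ J ih =>
    rw [Finset.sum_range_succ]
    have hstep : ∀ j ∈ Finset.range J, 1 / (m ^ (2 * j + 2) * n ^ (2 * (J + 1) - 2 * j))
        = (1 / n ^ 2) * (1 / (m ^ (2 * j + 2) * n ^ (2 * J - 2 * j))) := by
      intro j hj
      rw [Finset.mem_range] at hj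
      have he : 2 * (J + 1) - 2 * j = (2 * J - 2 * j) + 2 := by omega
      rw [he, pow_add, one_div_mul_one_div]
      ring_nf
    rw [Finset.sum_congr rfl hstep, ← Finset.mul_sum, ih]
    have e : 2 * (J + 1) - 2 * J = 2 := by omega
    have p1 : 2 * (J + 1) = 2 * J + 2 := by omega
    rw [e, p1, pow_add, pow_add]
    have h1 : m ^ (2 * J) ≠ 0 := pow_ne_zero _ hm
    have h2 : n ^ (2 * J) ≠ 0 := pow_ne_zero _ hn
    field_simp
    ring

lemma gkz_filter_eq (k K : ℕ) (hk : k = 2 * K) (hK : 2 ≤ K) :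
    (Finset.range (k + 1) ×ˢ Finset.range (k + 1)).filter
      (fun p => p.1 + p.2 = k ∧ 2 ≤ p.1 ∧ 2 ≤ p.2 ∧ p.1 % 2 = 0 ∧ p.2 % 2 = 0)
    = Finset.image (fun j => (2 * j + 2, k - (2 * j + 2))) (Finset.range (K - 1)) := by
  ext ⟨a, b⟩
  simp only [Finset.mem_filter, Finset.mem_product, Finset.mem_range, Finset.mem_image,
    Prod.mk.injEq]
  constructor
  · rintro ⟨⟨h1, h2⟩, h3, h4, h5, h6, h7⟩
    exact ⟨a / 2 - 1, by omega, by omega, by omega⟩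
  · rintro ⟨j, hj, rfl, rfl⟩
    omega


/-- The double zeta value `ζ(r,s) = Σ_{m > n > 0} 1/(m^r n^s)`. -/
noncomputable def dzeta (r s : ℕ) : ℝ :=
  ∑' p : {q : ℕ × ℕ // q.2 < q.1 ∧ 0 < q.2},
    (1 : ℝ) / ((p.1.1 : ℝ) ^ r * (p.1.2 : ℝ) ^ s)

/-- The Riemann zeta value `ζ(k) = Σ_{n≥1} n^{−k}`. -/
noncomputable def rzeta (k : ℕ) : ℝ :=
  ∑' n : ℕ, (1 : ℝ) / ((n : ℝ) + 1) ^ k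

/-- Gangl–Kaneko–Zagier: for every even `k ≥ 4`,
`Σ_{r+s=k, r,s ≥ 2 even} ζ(r,s) = (3/4) ζ(k)`. -/
theorem even_double_zeta_sum (k : ℕ) (hk : 4 ≤ k) (hke : k % 2 = 0) :
    ∑ p ∈ (Finset.range (k + 1) ×ˢ Finset.range (k + 1)).filter
        (fun p => p.1 + p.2 = k ∧ 2 ≤ p.1 ∧ 2 ≤ p.2 ∧ p.1 % 2 = 0 ∧ p.2 % 2 = 0),
      dzeta p.1 p.2 = 3 / 4 * rzeta k := by
  classical
  set K := k / 2 with hKdef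
  have hK2 : 2 ≤ K := by omega
  have hk2 : k = 2 * K := by omega
  set c := 2 * (K - 1) with hcdef
  have hc2 : 2 ≤ c := by omega
  have hck : c + 2 = k := by omega
  set F := (Finset.range (k + 1) ×ˢ Finset.range (k + 1)).filter
      (fun p => p.1 + p.2 = k ∧ 2 ≤ p.1 ∧ 2 ≤ p.2 ∧ p.1 % 2 = 0 ∧ p.2 % 2 = 0) with hF
  have hsum : ∀ p ∈ F, Summable (fun q : gkzS => (1:ℝ) / ((q.1.1 : ℝ) ^ p.1 * (q.1.2 : ℝ) ^ p.2)) := by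
    intro p hp
    rw [hF, Finset.mem_filter] at hp
    exact gkz_summable_dzeta hp.2.2.1 hp.2.2.2.1
  have step1 : ∑ p ∈ F, dzeta p.1 p.2
      = ∑' q : gkzS, ∑ p ∈ F, (1:ℝ) / ((q.1.1 : ℝ) ^ p.1 * (q.1.2 : ℝ) ^ p.2) := by
    unfold dzeta
    exact (Summable.tsum_finsetSum hsum).symm
  have step2 : ∀ q : gkzS, ∑ p ∈ F, (1:ℝ) / ((q.1.1 : ℝ) ^ p.1 * (q.1.2 : ℝ) ^ p.2)
      = gkzFa c q - gkzFb c q := by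
    rintro ⟨⟨m, n⟩, h1, h2⟩
    have hmr : ((m:ℕ):ℝ) ≠ 0 := by
      have : 0 < m := by omega
      positivity
    have hnr : ((n:ℕ):ℝ) ≠ 0 := by
      have : 0 < n := h2
      positivity
    have hmn : ((m:ℕ):ℝ) ^ 2 - ((n:ℕ):ℝ) ^ 2 ≠ 0 :=
      ne_of_gt (gkz_pos ⟨(m, n), h1, h2⟩)
    have hinj : ∀ j1 ∈ Finset.range (K - 1), ∀ j2 ∈ Finset.range (K - 1),
        (fun j => (2 * j + 2, k - (2 * j + 2))) j1 = (fun j => (2 * j + 2, k - (2 * j + 2))) j2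
        → j1 = j2 := by
      intro j1 _ j2 _ h
      simp only [Prod.mk.injEq] at h
      omega
    rw [hF, gkz_filter_eq k K hk2 hK2, Finset.sum_image hinj]
    have hterm : ∀ j ∈ Finset.range (K - 1),
        (1:ℝ) / ((m:ℝ) ^ (2 * j + 2) * (n:ℝ) ^ (k - (2 * j + 2)))
        = 1 / ((m:ℝ) ^ (2 * j + 2) * (n:ℝ) ^ (2 * (K - 1) - 2 * j)) := by
      intro j hj
      rw [Finset.mem_range] at hj
      have : k - (2 * j + 2) = 2 * (K - 1) - 2 * j := by omega
      rw [this]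
    rw [Finset.sum_congr rfl hterm, gkz_telescope _ _ hmr hnr hmn (K - 1)]
    rfl
  rw [step1, tsum_congr step2,
    Summable.tsum_sub (gkz_summable_Fa hc2) (gkz_summable_Fb hc2),
    gkz_tsum_Fa hc2, gkz_tsum_Fb hc2,
    ← Summable.tsum_sub (gkz_summable_Ga hc2) (gkz_summable_Gb hc2)]
  have step6 : ∀ n : ℕ, gkzGa c n - gkzGb c n = 3 / 4 * (1 / (n:ℝ) ^ k) := by
    intro n
    rw [gkz_G_diff hc2 n, hck]
  rw [tsum_congr step6, tsum_mul_left]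
  congr 1
  have hsummable : Summable (fun n : ℕ => 1 / (n:ℝ) ^ k) :=
    Real.summable_one_div_nat_pow.mpr (by omega)
  rw [Summable.tsum_eq_zero_add hsummable, Nat.cast_zero, zero_pow (by omega : k ≠ 0), div_zero, zero_add]
  unfold rzeta
  apply tsum_congr
  intro n
  push_cast
  rfl
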